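/- Let K have characteristic 0, d ≥ 2, and V a finite-dimensional K-vector space. The strength of f ∈ S^d(V) defined via products (minimal k with f = Σ gᵢhᵢ, deg gᵢ, deg hᵢ < d) equals the strength defined via bilinear polynomial transformations (minimal k with f = Σ αᵢ(qᵢ, rᵢ) where αᵢ: Qᵢ ⊕ Rᵢ → S^d are bilinear polynomial transformations from irreducible polynomial functors Qᵢ, Rᵢ of positive degrees summing to d). -/

import Mathlib

open MvPolynomial

/-- The action of a linear map (given by the matrix `C : K^n → K^m`) on the `e`-th tensor
power `T^e(Kⁿ) = (Kⁿ)^{⊗e}`, in coordinates. Elements of `T^e(Kⁿ)` are recorded by their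
coordinates with respect to the standard basis, i.e. as functions `(Fin e → Fin n) → K`.
Every irreducible polynomial functor of degree `e` is a subfunctor of `T^e`. -/
noncomputable def tensorMap {K : Type*} [CommRing K] {e n m : ℕ}
    (C : Matrix (Fin m) (Fin n) K) (q : (Fin e → Fin n) → K) : (Fin e → Fin m) → K :=
  fun j => ∑ i : Fin e → Fin n, (∏ l, C (j l) (i l)) * q i

/-- The substitution of variables induced by the linear map `C : K^n → K^m` on polynomials,
i.e. the map `S(C) : S(Kⁿ) → S(K^m)`. -/
noncomputable def substMap {K : Type*} [CommSemiring K] {n m : ℕ}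
    (C : Matrix (Fin m) (Fin n) K) :
    MvPolynomial (Fin n) K →ₐ[K] MvPolynomial (Fin m) K :=
  aeval (fun j : Fin n => ∑ i : Fin m, C i j • (X i : MvPolynomial (Fin m) K))


section StrengthAux

def dirac {K : Type*} [CommRing K] {e m : ℕ} (i : Fin e → Fin m) : (Fin e → Fin m) → K :=
  fun i' => if i' = i then 1 else 0

noncomputable def sym {K : Type*} [CommRing K] {e n : ℕ}
    (q : (Fin e → Fin n) → K) : MvPolynomial (Fin n) K :=
  ∑ i : Fin e → Fin n, MvPolynomial.C (q i) * ∏ l, X (i l)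

def permM {K : Type*} [CommRing K] {N m : ℕ} (σ : Fin N → Fin m) : Matrix (Fin m) (Fin N) K :=
  Matrix.of fun a b => if a = σ b then 1 else 0

variable {K : Type*} [CommRing K]

lemma sym_dirac {e n : ℕ} (i : Fin e → Fin n) :
    sym (K := K) (dirac i) = ∏ l, X (i l) := by
  rw [sym, Finset.sum_eq_single i]
  · simp [dirac]
  · intro b _ hb; simp [dirac, hb]
  · simp

lemma sym_add {e n : ℕ} (q q' : (Fin e → Fin n) → K) :
    sym (q + q') = sym q + sym q' := by
  simp [sym, add_mul, Finset.sum_add_distrib]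

lemma sym_smul {e n : ℕ} (a : K) (q : (Fin e → Fin n) → K) :
    sym (a • q) = a • sym q := by
  simp [sym, Finset.smul_sum, smul_eq_C_mul, mul_assoc]

noncomputable def symL (e n : ℕ) : ((Fin e → Fin n) → K) →ₗ[K] MvPolynomial (Fin n) K where
  toFun := sym
  map_add' := sym_add
  map_smul' := sym_smul

lemma sym_isHomogeneous {e n : ℕ} (q : (Fin e → Fin n) → K) :
    (sym q).IsHomogeneous e := by
  apply MvPolynomial.IsHomogeneous.sum
  intro i _
  have h1 : (MvPolynomial.C (q i) : MvPolynomial (Fin n) K).IsHomogeneous 0 :=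
    isHomogeneous_C _ _
  have h2 : (∏ l, (X (i l) : MvPolynomial (Fin n) K)).IsHomogeneous e := by
    have := MvPolynomial.IsHomogeneous.prod (Finset.univ : Finset (Fin e))
      (fun l => (X (i l) : MvPolynomial (Fin n) K)) (fun _ => 1)
      (fun l _ => isHomogeneous_X _ _)
    simpa using this
  simpa using h1.mul h2

lemma dirac_expand {e n : ℕ} (q : (Fin e → Fin n) → K) :
    q = ∑ i : Fin e → Fin n, q i • (dirac i : (Fin e → Fin n) → K) := by
  funext i'
  simp [dirac, Finset.sum_apply, Pi.smul_apply]

lemma prod_X_eq_monomial {e n : ℕ} (i : Fin e → Fin n) :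
    (∏ l, (X (i l) : MvPolynomial (Fin n) K)) =
      monomial (∑ l, Finsupp.single (i l) 1) 1 := by
  induction e with
  | zero => simp
  | succ e ih =>
    rw [Fin.prod_univ_succ, Fin.sum_univ_succ, X, ih (fun l => i l.succ),
      monomial_mul, one_mul]

lemma exists_index_fun {n : ℕ} : ∀ (e : ℕ) (s : Fin n →₀ ℕ), (s.sum fun _ k => k) = e →
    ∃ i : Fin e → Fin n, (∑ l, Finsupp.single (i l) 1) = s := by
  intro e
  induction e with
  | zero =>
    intro s hs
    refine ⟨Fin.elim0, ?_⟩
    have : s = 0 := by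
      ext a
      by_contra h
      have ha : a ∈ s.support := Finsupp.mem_support_iff.mpr (by simpa using h)
      have : 0 < s.sum fun _ k => k := by
        rw [Finsupp.sum]
        exact Finset.sum_pos' (fun _ _ => Nat.zero_le _)
          ⟨a, ha, Nat.pos_of_ne_zero (by simpa using h)⟩
      omega
    simp [this]
  | succ e ih =>
    intro s hs
    have hne : s ≠ 0 := by
      intro h; rw [h] at hs; simp [Finsupp.sum] at hs
    obtain ⟨a, ha⟩ := Finsupp.ne_iff.mp hne
    have ha' : 1 ≤ s a := Nat.one_le_iff_ne_zero.mpr (by simpa using ha)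
    have hle : Finsupp.single a 1 ≤ s := Finsupp.single_le_iff.mpr ha'
    set s' := s - Finsupp.single a 1 with hs'
    have hadd : Finsupp.single a 1 + s' = s := add_tsub_cancel_of_le hle
    have hsum : (s'.sum fun _ k => k) = e := by
      have h2 := congrArg (fun t : Fin n →₀ ℕ => t.sum fun _ k => k) hadd
      rw [Finsupp.sum_add_index (by simp) (by intros; rfl)] at h2
      rw [Finsupp.sum_single_index rfl] at h2
      omega
    obtain ⟨i', hi'⟩ := ih s' hsum
    refine ⟨Fin.cons a i', ?_⟩
    rw [Fin.sum_univ_succ]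
    simp only [Fin.cons_zero, Fin.cons_succ]
    rw [hi', hadd]

lemma sym_surjective {e n : ℕ} (g : MvPolynomial (Fin n) K) (hg : g.IsHomogeneous e) :
    ∃ q : (Fin e → Fin n) → K, sym q = g := by
  classical
  have key : ∀ s ∈ g.support, ∃ i : Fin e → Fin n,
      sym (K := K) (dirac i) = monomial s 1 := by
    intro s hs
    have hdeg : (s.sum fun _ k => k) = e := by
      have := hg (Finsupp.mem_support_iff.mp hs)
      rw [Finsupp.weight_apply] at this
      simpa [Finsupp.sum] using this
    obtain ⟨i, hi⟩ := exists_index_fun e s hdeg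
    exact ⟨i, by rw [sym_dirac, prod_X_eq_monomial, hi]⟩
  refine ⟨∑ s ∈ g.support.attach, (coeff s.1 g) • dirac (Classical.choose (key s.1 s.2)), ?_⟩
  show symL e n _ = g
  rw [map_sum]
  have : ∀ s : {x // x ∈ g.support},
      symL e n ((coeff s.1 g) • (dirac (Classical.choose (key s.1 s.2)) : (Fin e → Fin n) → K))
        = monomial s.1 (coeff s.1 g) := by
    intro s
    rw [map_smul]
    have := Classical.choose_spec (key s.1 s.2)
    show (coeff s.1 g) • sym _ = _
    rw [this, smul_monomial, smul_eq_mul, mul_one]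
  rw [Finset.sum_congr rfl (fun s _ => this s)]
  rw [Finset.sum_attach g.support (fun s => monomial s (coeff s g))]
  exact support_sum_monomial_coeff g

lemma substMap_X {n m : ℕ} (C : Matrix (Fin m) (Fin n) K) (b : Fin n) :
    substMap C (X b) = ∑ i : Fin m, C i b • (X i : MvPolynomial (Fin m) K) := by
  simp [substMap]

lemma substMap_sym {e n m : ℕ} (C : Matrix (Fin m) (Fin n) K) (q : (Fin e → Fin n) → K) :
    substMap C (sym q) = sym (tensorMap C q) := by
  rw [sym, map_sum]
  have step : ∀ i : Fin e → Fin n,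
      substMap C (MvPolynomial.C (q i) * ∏ l, X (i l)) =
        ∑ j : Fin e → Fin m, MvPolynomial.C ((∏ l, C (j l) (i l)) * q i) * ∏ l, X (j l) := by
    intro i
    rw [map_mul, map_prod]
    have : ∀ l : Fin e, substMap C (X (i l)) =
        ∑ a : Fin m, C a (i l) • (X a : MvPolynomial (Fin m) K) := fun l => substMap_X C (i l)
    rw [Finset.prod_congr rfl (fun l _ => this l)]
    rw [Finset.prod_univ_sum]
    rw [substMap, aeval_C, Finset.mul_sum]
    apply Finset.sum_congr rfl
    intro j _
    simp only [MvPolynomial.smul_eq_C_mul, Finset.prod_mul_distrib, map_mul, map_prod,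
      algebraMap_eq]
    ring
  rw [Finset.sum_congr rfl (fun i _ => step i), Finset.sum_comm]
  rw [sym]
  apply Finset.sum_congr rfl
  intro j _
  simp [tensorMap, map_sum, Finset.sum_mul]

lemma tensorMap_perm_dirac {N m e : ℕ} (σ : Fin N → Fin m) (i : Fin e → Fin N) :
    tensorMap (permM (K := K) σ) (dirac i) = dirac (σ ∘ i) := by
  funext j
  rw [tensorMap, Finset.sum_eq_single i]
  · rw [dirac, if_pos rfl, mul_one]
    by_cases h : j = σ ∘ i
    · rw [dirac, if_pos h]
      apply Finset.prod_eq_one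
      intro l _
      rw [permM]
      simp [congrFun h l]
    · rw [dirac, if_neg h]
      obtain ⟨l, hl⟩ : ∃ l, j l ≠ σ (i l) := by
        by_contra hc
        push_neg at hc
        exact h (funext hc)
      exact Finset.prod_eq_zero (Finset.mem_univ l) (by simp [permM, hl])
  · intro b _ hb; simp [dirac, hb]
  · simp

lemma substMap_perm_X {N m : ℕ} (σ : Fin N → Fin m) (b : Fin N) :
    substMap (permM (K := K) σ) (X b) = X (σ b) := by
  rw [substMap_X]
  rw [Finset.sum_eq_single (σ b)]
  · simp [permM]
  · intro a _ ha; simp [permM, ha]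
  · simp

lemma tensorMap_diag_dirac {N e : ℕ} (t : Fin N → K) (i : Fin e → Fin N) :
    tensorMap (Matrix.diagonal t) (dirac i)
      = (∏ l, t (i l)) • (dirac i : (Fin e → Fin N) → K) := by
  funext j
  rw [tensorMap, Finset.sum_eq_single i]
  · rw [dirac, Pi.smul_apply, dirac]
    simp only [if_pos rfl, mul_one]
    by_cases h : j = i
    · subst h; simp [Matrix.diagonal_apply_eq]
    · rw [if_neg h, smul_zero]
      obtain ⟨l, hl⟩ : ∃ l, j l ≠ i l := by
        by_contra hc; push_neg at hc; exact h (funext hc)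
      have hz : (∏ l, Matrix.diagonal t (j l) (i l)) = 0 :=
        Finset.prod_eq_zero (Finset.mem_univ l) (Matrix.diagonal_apply_ne t hl)
      simp [hz]
  · intro b _ hb; simp [dirac, hb]
  · simp

lemma substMap_diag_X {N : ℕ} (t : Fin N → K) (b : Fin N) :
    substMap (Matrix.diagonal t) (X b) = t b • (X b : MvPolynomial (Fin N) K) := by
  rw [substMap_X, Finset.sum_eq_single b]
  · simp
  · intro a _ ha; simp [Matrix.diagonal_apply_ne _ ha]
  · simp

lemma coeff_substMap_diag {N : ℕ} (t : Fin N → K) (p : MvPolynomial (Fin N) K)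
    (s : Fin N →₀ ℕ) :
    coeff s (substMap (Matrix.diagonal t) p) = (∏ a, t a ^ s a) * coeff s p := by
  induction p using MvPolynomial.induction_on' with
  | monomial u a =>
    have huniv : (∏ b ∈ u.support, t b ^ u b) = ∏ b, t b ^ u b := by
      apply Finset.prod_subset (Finset.subset_univ _)
      intro b _ hb
      rw [Finsupp.notMem_support_iff.mp hb, pow_zero]
    have hX : ∀ b : Fin N,
        (∑ i, Matrix.diagonal t i b • (X i : MvPolynomial (Fin N) K)) = t b • X b := by
      intro b; rw [← substMap_X, substMap_diag_X]
    have : substMap (Matrix.diagonal t) (monomial u a)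
        = (∏ b, t b ^ u b) • monomial u a := by
      rw [substMap, aeval_monomial, algebraMap_eq, monomial_eq, Finsupp.prod, Finsupp.prod,
        MvPolynomial.smul_eq_C_mul]
      simp only [hX]
      simp only [smul_pow, MvPolynomial.smul_eq_C_mul, mul_pow, ← map_pow]
      rw [Finset.prod_mul_distrib, ← map_prod, huniv]
      ring
    rw [this, coeff_smul, smul_eq_mul, coeff_monomial]
    by_cases h : u = s
    · subst h; ring
    · simp [h]
  | add p q hp hq => rw [map_add, coeff_add, coeff_add, hp, hq, mul_add]

end StrengthAux

section StrengthMain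
variable {K : Type*} [Field K] [CharZero K]

lemma two_pow_eq_two {k : ℕ} (h : (2:K)^k = 2) : k = 1 := by
  have h2 : ((2^k : ℕ) : K) = ((2^1 : ℕ) : K) := by push_cast; simpa using h
  exact Nat.pow_right_injective (le_refl 2) (Nat.cast_inj.mp h2)

lemma s0_apply {N : ℕ} (a : Fin N) : (∑ b : Fin N, Finsupp.single b 1 : Fin N →₀ ℕ) a = 1 := by
  rw [Finsupp.finset_sum_apply]
  simp [Finsupp.single_apply]

lemma natural_bilinear_eq {e e' : ℕ}
    (α : ∀ m : ℕ, ((Fin e → Fin m) → K) →ₗ[K] ((Fin e' → Fin m) → K) →ₗ[K] MvPolynomial (Fin m) K)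
    (hnat : ∀ (m m' : ℕ) (C : Matrix (Fin m') (Fin m) K) q r,
      substMap C (α m q r) = α m' (tensorMap C q) (tensorMap C r)) :
    ∃ c : K, ∀ (m : ℕ) (q : (Fin e → Fin m) → K) (r : (Fin e' → Fin m) → K),
      α m q r = c • (sym q * sym r) := by
  classical
  set N := e + e' with hN
  set i₀ : Fin e → Fin N := Fin.castAdd e' with hi₀
  set j₀ : Fin e' → Fin N := Fin.natAdd e with hj₀
  set p₀ := α N (dirac i₀) (dirac j₀) with hp₀
  set s₀ : Fin N →₀ ℕ := ∑ b : Fin N, Finsupp.single b 1 with hs₀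
  set c := coeff s₀ p₀ with hc
  have hdiag : ∀ t : Fin N → K, substMap (Matrix.diagonal t) p₀ = (∏ a, t a) • p₀ := by
    intro t
    rw [hp₀, hnat _ _ (Matrix.diagonal t), tensorMap_diag_dirac, tensorMap_diag_dirac]
    simp only [map_smul, LinearMap.smul_apply, smul_smul]
    congr 1
    rw [hi₀, hj₀, mul_comm]
    exact (Fin.prod_univ_add (f := t)).symm
  have hsupp : ∀ s ∈ p₀.support, s = s₀ := by
    intro s hs
    have hcs : coeff s p₀ ≠ 0 := mem_support_iff.mp hs
    have key : ∀ a₀ : Fin N, s a₀ = 1 := by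
      intro a₀
      set t : Fin N → K := Function.update (fun _ => (1:K)) a₀ 2 with ht
      have h1 := congrArg (coeff s) (hdiag t)
      rw [coeff_substMap_diag, coeff_smul, smul_eq_mul] at h1
      have hprod1 : (∏ a, t a ^ s a) = 2 ^ s a₀ := by
        rw [Finset.prod_eq_single a₀]
        · rw [ht, Function.update_self]
        · intro b _ hb
          rw [ht, Function.update_of_ne hb]
          simp
        · simp
      have hprod2 : (∏ a, t a) = 2 := by
        rw [Finset.prod_eq_single a₀]
        · rw [ht, Function.update_self]
        · intro b _ hb
          rw [ht, Function.update_of_ne hb]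
        · simp
      rw [hprod1, hprod2] at h1
      exact two_pow_eq_two (mul_right_cancel₀ hcs h1)
    ext a
    rw [key a]
    exact (s0_apply a).symm
  have hp₀eq : p₀ = c • monomial s₀ 1 := by
    have hsub : p₀.support ⊆ {s₀} := fun s hs => Finset.mem_singleton.mpr (hsupp s hs)
    conv_lhs => rw [p₀.as_sum]
    rw [Finset.sum_subset hsub]
    · rw [Finset.sum_singleton, hc, smul_monomial, smul_eq_mul, mul_one]
    · intro x _ hx
      rw [notMem_support_iff.mp hx, map_zero]
  have hbasis : ∀ (m : ℕ) (i : Fin e → Fin m) (j : Fin e' → Fin m),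
      α m (dirac i) (dirac j) = c • ((∏ l, X (i l)) * ∏ l, X (j l)) := by
    intro m i j
    set σ : Fin N → Fin m := fun a => Fin.addCases i j a with hσ
    have hσi : σ ∘ i₀ = i := by
      funext l
      simp only [hσ, hi₀, Function.comp_apply]
      exact Fin.addCases_left l
    have hσj : σ ∘ j₀ = j := by
      funext l
      simp only [hσ, hj₀, Function.comp_apply]
      exact Fin.addCases_right l
    have h1 := hnat N m (permM σ) (dirac i₀) (dirac j₀)
    rw [tensorMap_perm_dirac, tensorMap_perm_dirac, hσi, hσj] at h1
    rw [← h1, ← hp₀, hp₀eq, map_smul]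
    congr 1
    have hmono : (monomial s₀ (1:K)) = ∏ a : Fin N, X a := by
      rw [hs₀, ← prod_X_eq_monomial (i := fun a : Fin N => a)]
    rw [hmono, map_prod]
    have hXs : ∀ a : Fin N, substMap (permM (K := K) σ) (X a) = X (σ a) :=
      fun a => substMap_perm_X σ a
    rw [Finset.prod_congr rfl (fun a _ => hXs a), Fin.prod_univ_add]
    congr 1
    · exact Finset.prod_congr rfl (fun l _ => by rw [hσ]; simp [Fin.addCases_left])
    · exact Finset.prod_congr rfl (fun l _ => by rw [hσ]; simp [Fin.addCases_right])
  refine ⟨c, ?_⟩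
  intro m q r
  have expand : α m q r = ∑ i, ∑ j, (q i * r j) • α m (dirac i) (dirac j) := by
    conv_lhs => rw [dirac_expand q, dirac_expand r]
    simp only [map_sum, LinearMap.sum_apply, map_smul, LinearMap.smul_apply, Finset.smul_sum,
      smul_smul]
    rw [Finset.sum_comm]
    apply Finset.sum_congr rfl
    intro i _
    apply Finset.sum_congr rfl
    intro j _
    rw [mul_comm]
  have hsym : sym q * sym r
      = ∑ i, ∑ j, (q i * r j) • ((∏ l, X (i l)) * ∏ l, (X (j l) : MvPolynomial (Fin m) K)) := by
    rw [sym, sym, Finset.sum_mul_sum]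
    apply Finset.sum_congr rfl
    intro i _
    apply Finset.sum_congr rfl
    intro j _
    rw [MvPolynomial.smul_eq_C_mul, map_mul]
    ring
  rw [expand, hsym, Finset.smul_sum]
  apply Finset.sum_congr rfl
  intro i _
  rw [Finset.smul_sum]
  apply Finset.sum_congr rfl
  intro j _
  rw [hbasis m i j, smul_comm]
end StrengthMain

/-- For a homogeneous polynomial `f` of degree `d ≥ 2`, the strength defined via products of
lower-degree homogeneous polynomials equals the strength defined via bilinear polynomial
transformations `Q ⊕ R → S^d` from pairs of polynomial functors of positive degrees summing
to `d` (encoded via the tensor powers `T^e`, in which all irreducible polynomial functors of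
degree `e` embed): the two corresponding sets of admissible numbers of summands have the
same minimum. -/
theorem stmt9 (K : Type*) [Field K] [IsAlgClosed K] [CharZero K]
    (d : ℕ) (hd : 2 ≤ d) (n : ℕ) (f : MvPolynomial (Fin n) K) (hf : f.IsHomogeneous d) :
    sInf {k : ℕ | ∃ g h : Fin k → MvPolynomial (Fin n) K,
        (∀ i, ∃ e : ℕ, 0 < e ∧ e < d ∧ (g i).IsHomogeneous e ∧ (h i).IsHomogeneous (d - e)) ∧
        f = ∑ i, g i * h i}
    = sInf {k : ℕ | ∃ e : Fin k → ℕ, (∀ i, 0 < e i ∧ e i < d) ∧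
        ∃ α : ∀ (i : Fin k) (m : ℕ), ((Fin (e i) → Fin m) → K) →ₗ[K]
            ((Fin (d - e i) → Fin m) → K) →ₗ[K] MvPolynomial (Fin m) K,
          (∀ (i : Fin k) (m m' : ℕ) (C : Matrix (Fin m') (Fin m) K)
              (q : (Fin (e i) → Fin m) → K) (r : (Fin (d - e i) → Fin m) → K),
            substMap C (α i m q r) = α i m' (tensorMap C q) (tensorMap C r)) ∧
          ∃ (q : ∀ i : Fin k, (Fin (e i) → Fin n) → K)
            (r : ∀ i : Fin k, (Fin (d - e i) → Fin n) → K),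
            f = ∑ i, α i n (q i) (r i)} := by
  congr 1
  ext k
  simp only [Set.mem_setOf_eq]
  constructor
  · rintro ⟨g, h, hgh, hfeq⟩
    choose e he0 he1 hge hhe using hgh
    refine ⟨e, fun i => ⟨he0 i, he1 i⟩,
      fun i m => LinearMap.mk₂ K (fun q r => sym q * sym r)
        (fun q q' r => by rw [sym_add, add_mul])
        (fun a q r => by rw [sym_smul, smul_mul_assoc])
        (fun q r r' => by rw [sym_add, mul_add])
        (fun a q r => by rw [sym_smul, mul_smul_comm]), ?_, ?_⟩
    · intro i m m' C q r
      show substMap C (sym q * sym r) = sym (tensorMap C q) * sym (tensorMap C r)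
      rw [map_mul, substMap_sym, substMap_sym]
    · have hq := fun i => sym_surjective (g i) (hge i)
      have hr := fun i => sym_surjective (h i) (hhe i)
      choose q hq using hq
      choose r hr using hr
      refine ⟨q, r, ?_⟩
      rw [hfeq]
      apply Finset.sum_congr rfl
      intro i _
      show g i * h i = sym (q i) * sym (r i)
      rw [hq i, hr i]
  · rintro ⟨e, hee, α, hnat, q, r, hfeq⟩
    choose c hcα using fun i => natural_bilinear_eq (α i) (fun m m' C => hnat i m m' C)
    refine ⟨fun i => c i • sym (q i), fun i => sym (r i), ?_, ?_⟩
    · intro i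
      refine ⟨e i, (hee i).1, (hee i).2, ?_, sym_isHomogeneous (r i)⟩
      show (c i • sym (q i) : MvPolynomial (Fin n) K).IsHomogeneous (e i)
      have : (c i • sym (q i) : MvPolynomial (Fin n) K) = MvPolynomial.C (c i) * sym (q i) := by
        rw [MvPolynomial.smul_eq_C_mul]
      rw [this]
      simpa using (isHomogeneous_C _ (c i)).mul (sym_isHomogeneous (q i))
    · rw [hfeq]
      apply Finset.sum_congr rfl
      intro i _
      show ((α i n) (q i)) (r i) = (c i • sym (q i)) * sym (r i)
      rw [hcα i n, smul_mul_assoc]
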